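/- arXiv:1810.10397 — 3 statements merged into one kernel-verified Lean document; each statement's English description precedes it below -/
import Mathlib

section
/- Let F be a field of characteristic ≠ 2. Let A1 = [[0,0,0,1],[0,0,1,0],[0,-1,0,0],[-1,0,0,0]], B1 = [[0,1,0,1],[-1,0,0,0],[0,0,0,0],[-1,0,0,0]], and A2 = B2 = 0 (4×4 skew-symmetric). Then σ2(A1) = σ2(B1), but det(A1) ≠ det(B1). -/
/-- Sum of the principal 2×2 minors of a 4×4 matrix. -/
def sigma2 {R : Type*} [CommRing R] (A : Matrix (Fin 4) (Fin 4) R) : R :=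
  (A 0 0 * A 1 1 - A 0 1 * A 1 0) + (A 0 0 * A 2 2 - A 0 2 * A 2 0) +
    (A 0 0 * A 3 3 - A 0 3 * A 3 0) + (A 1 1 * A 2 2 - A 1 2 * A 2 1) +
    (A 1 1 * A 3 3 - A 1 3 * A 3 1) + (A 2 2 * A 3 3 - A 2 3 * A 3 2)

theorem stmt_8 (F : Type*) [Field F] (hchar : ringChar F ≠ 2)
    (A1 B1 A2 B2 : Matrix (Fin 4) (Fin 4) F)
    (hA1 : A1 = !![0, 0, 0, 1; 0, 0, 1, 0; 0, -1, 0, 0; -1, 0, 0, 0])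
    (hB1 : B1 = !![0, 1, 0, 1; -1, 0, 0, 0; 0, 0, 0, 0; -1, 0, 0, 0])
    (hA2 : A2 = 0) (hB2 : B2 = 0) :
    sigma2 A1 = sigma2 B1 ∧ A1.det ≠ B1.det := by
  subst hA1 hB1
  constructor
  · simp [sigma2]
  · simp [Matrix.det_succ_row_zero, Fin.sum_univ_succ,
      show (Fin.succAbove 3 2 : Fin 4) = 2 from rfl]
end

section
/- Let F be a field of characteristic ≠ 2. Set A1 = [[0,1,0,0],[-1,0,0,0],[0,0,0,-1],[0,0,1,0]], B1 = [[0,-1,0,0],[1,0,0,0],[0,0,0,-1],[0,0,1,0]], and A2 = B2 = [[0,0,1,0],[0,0,0,1],[-1,0,0,0],[0,-1,0,0]]. Then (A1,A2) and (B1,B2) agree on σ2(Zi), det(Zi) (i=1,2), tr(Z1Z2), tr(Z1²Z2²), tr(Z1³Z2), tr(Z1Z2³), but σ2(A1A2) ≠ σ2(B1B2). -/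
theorem stmt_9 (F : Type*) [Field F] (hchar : ringChar F ≠ 2)
    (A1 A2 B1 B2 : Matrix (Fin 4) (Fin 4) F)
    (hA1 : A1 = !![0, 1, 0, 0; -1, 0, 0, 0; 0, 0, 0, -1; 0, 0, 1, 0])
    (hB1 : B1 = !![0, -1, 0, 0; 1, 0, 0, 0; 0, 0, 0, -1; 0, 0, 1, 0])
    (hA2 : A2 = !![0, 0, 1, 0; 0, 0, 0, 1; -1, 0, 0, 0; 0, -1, 0, 0])
    (hB2 : B2 = !![0, 0, 1, 0; 0, 0, 0, 1; -1, 0, 0, 0; 0, -1, 0, 0]) :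
    sigma2 A1 = sigma2 B1 ∧ sigma2 A2 = sigma2 B2 ∧
    A1.det = B1.det ∧ A2.det = B2.det ∧
    (A1 * A2).trace = (B1 * B2).trace ∧
    (A1 ^ 2 * A2 ^ 2).trace = (B1 ^ 2 * B2 ^ 2).trace ∧
    (A1 ^ 3 * A2).trace = (B1 ^ 3 * B2).trace ∧
    (A1 * A2 ^ 3).trace = (B1 * B2 ^ 3).trace ∧
    sigma2 (A1 * A2) ≠ sigma2 (B1 * B2) := by
  subst hA1 hB1 hA2 hB2
  have h2 : (2 : F) ≠ 0 := Ring.two_ne_zero hchar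
  refine ⟨?_, rfl, ?_, rfl, ?_, ?_, ?_, ?_, ?_⟩
  · norm_num [sigma2, Matrix.cons_val_two, Matrix.cons_val_three,
      Matrix.vecHead, Matrix.vecTail]
  · norm_num [Matrix.det_succ_row_zero, Fin.sum_univ_succ, Matrix.cons_val_two, Matrix.cons_val_three,
      Matrix.vecHead, Matrix.vecTail, Fin.succAbove, Fin.succ]
  · norm_num [Matrix.trace, Matrix.diag, Matrix.mul_apply, Fin.sum_univ_four, Matrix.cons_val_two, Matrix.cons_val_three,
      Matrix.vecHead, Matrix.vecTail]
  · norm_num [Matrix.trace, Matrix.diag, Matrix.mul_apply, Fin.sum_univ_four, pow_two, Matrix.cons_val_two, Matrix.cons_val_three,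
      Matrix.vecHead, Matrix.vecTail]
  · norm_num [Matrix.trace, Matrix.diag, Matrix.mul_apply, Fin.sum_univ_four, pow_succ, pow_zero,
      Matrix.one_mul, Matrix.cons_val_two, Matrix.cons_val_three,
      Matrix.vecHead, Matrix.vecTail]
  · norm_num [Matrix.trace, Matrix.diag, Matrix.mul_apply, Fin.sum_univ_four, pow_succ, pow_zero,
      Matrix.one_mul, Matrix.cons_val_two, Matrix.cons_val_three,
      Matrix.vecHead, Matrix.vecTail]
  · intro h
    apply h2
    have e1 : sigma2 (!![0, 1, 0, 0; -1, 0, 0, 0; 0, 0, 0, -1; 0, 0, 1, 0] *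
        !![0, 0, 1, 0; 0, 0, 0, 1; -1, 0, 0, 0; 0, -1, 0, 0] : Matrix (Fin 4) (Fin 4) F)
        = 2 := by norm_num [sigma2, Matrix.mul_apply, Fin.sum_univ_four, Matrix.vecHead, Matrix.vecTail, Matrix.cons_val_two,
          Matrix.cons_val_three]
    have e2 : sigma2 (!![0, -1, 0, 0; 1, 0, 0, 0; 0, 0, 0, -1; 0, 0, 1, 0] *
        !![0, 0, 1, 0; 0, 0, 0, 1; -1, 0, 0, 0; 0, -1, 0, 0] : Matrix (Fin 4) (Fin 4) F)
        = -2 := by norm_num [sigma2, Matrix.mul_apply, Fin.sum_univ_four, Matrix.vecHead, Matrix.vecTail, Matrix.cons_val_two,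
          Matrix.cons_val_three]
    rw [e1, e2] at h
    have h4 : (2 : F) * 2 = 0 := by linear_combination h
    rcases mul_eq_zero.mp h4 with h' | h' <;> exact h'
end

section
/- Let F be a field of characteristic ≠ 2. Set A1 = B1 = [[0,0,1,1],[0,0,1,1],[-1,-1,0,0],[-1,-1,0,0]], A2 = [[0,1,0,1],[-1,0,0,-1],[0,0,0,1],[-1,1,-1,0]], B2 = [[0,1,0,-1],[-1,0,0,1],[0,0,0,1],[1,-1,-1,0]]. Then (A1,A2) and (B1,B2) agree on σ2(Zi), det(Zi) (i=1,2), tr(Z1Z2), σ2(Z1Z2), tr(Z1²Z2²), tr(Z1³Z2), but tr(A1A2³) ≠ tr(B1B2³). -/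
theorem trace_fin_four' {R : Type*} [CommRing R] (A : Matrix (Fin 4) (Fin 4) R) :
    A.trace = A 0 0 + A 1 1 + A 2 2 + A 3 3 := by
  simp [Matrix.trace, Fin.sum_univ_four, Matrix.vecHead, Matrix.vecTail]

theorem stmt_11 (F : Type*) [Field F] (hchar : ringChar F ≠ 2)
    (A1 A2 B1 B2 : Matrix (Fin 4) (Fin 4) F)
    (hA1 : A1 = !![0, 0, 1, 1; 0, 0, 1, 1; -1, -1, 0, 0; -1, -1, 0, 0])
    (hB1 : B1 = !![0, 0, 1, 1; 0, 0, 1, 1; -1, -1, 0, 0; -1, -1, 0, 0])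
    (hA2 : A2 = !![0, 1, 0, 1; -1, 0, 0, -1; 0, 0, 0, 1; -1, 1, -1, 0])
    (hB2 : B2 = !![0, 1, 0, -1; -1, 0, 0, 1; 0, 0, 0, 1; 1, -1, -1, 0]) :
    sigma2 A1 = sigma2 B1 ∧ sigma2 A2 = sigma2 B2 ∧
    A1.det = B1.det ∧ A2.det = B2.det ∧
    (A1 * A2).trace = (B1 * B2).trace ∧
    sigma2 (A1 * A2) = sigma2 (B1 * B2) ∧
    (A1 ^ 2 * A2 ^ 2).trace = (B1 ^ 2 * B2 ^ 2).trace ∧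
    (A1 ^ 3 * A2).trace = (B1 ^ 3 * B2).trace ∧
    (A1 * A2 ^ 3).trace ≠ (B1 * B2 ^ 3).trace := by

  subst hA1 hB1 hA2 hB2
  have h2 : (2:F) ≠ 0 := by
    simpa using Ring.two_ne_zero (by simpa [ringChar.spec] using hchar)
  refine ⟨rfl, ?_, rfl, ?_, ?_, ?_, ?_, ?_, ?_⟩
  · norm_num [sigma2, Matrix.cons_val_two, Matrix.cons_val_three, Matrix.vecHead, Matrix.vecTail]
  · norm_num [Matrix.det_succ_row_zero, Fin.sum_univ_succ, Matrix.cons_val_two, Matrix.cons_val_three, Matrix.vecHead, Matrix.vecTail]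
  · norm_num [trace_fin_four', Matrix.mul_apply, Fin.sum_univ_four, Matrix.vecHead, Matrix.vecTail, Matrix.cons_val_two, Matrix.cons_val_three]
  · norm_num [sigma2, Matrix.mul_apply, Fin.sum_univ_four, Matrix.vecHead, Matrix.vecTail, Matrix.cons_val_two, Matrix.cons_val_three]
  · simp only [pow_two]
    norm_num [trace_fin_four', Matrix.mul_apply, Fin.sum_univ_four, Matrix.vecHead, Matrix.vecTail, Matrix.cons_val_two, Matrix.cons_val_three]
  · simp only [pow_succ, pow_zero, one_mul]
    norm_num [trace_fin_four', Matrix.mul_apply, Fin.sum_univ_four, Matrix.vecHead, Matrix.vecTail, Matrix.cons_val_two, Matrix.cons_val_three]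
  · simp only [pow_succ, pow_zero, one_mul]
    norm_num [trace_fin_four', Matrix.mul_apply, Fin.sum_univ_four, Matrix.vecHead, Matrix.vecTail, Matrix.cons_val_two, Matrix.cons_val_three]
    intro h
    have h8 : (2:F)^3 = 0 := by linear_combination -h
    exact h2 (pow_eq_zero_iff three_ne_zero |>.mp h8)
end
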